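/- (Proof step of Lemma 3.1.) Let X be a topological space and φ : X → Polynomial ℂ a continuous family of monic polynomials of degree n. Then the set of points p ∈ X such that the number of distinct complex roots of φ(x) (i.e. the function x ↦ (φ x).roots.toFinset.card) is constant on some neighborhood of p is open and dense in X. -/

import Mathlib

open Polynomial Finset

private lemma pow_le_prod_aux {ε : ℝ} (hε : 0 ≤ ε) (s : Multiset ℝ) (h : ∀ x ∈ s, ε ≤ x) :
    ε ^ Multiset.card s ≤ s.prod := by
  induction s using Multiset.induction with
  | empty => simp
  | cons a s ih =>
    simp only [Multiset.card_cons, Multiset.prod_cons, pow_succ]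
    rw [mul_comm]
    have ha := h a (Multiset.mem_cons_self a s)
    exact mul_le_mul ha (ih fun x hx => h x (Multiset.mem_cons_of_mem hx))
      (pow_nonneg hε _) (le_trans hε ha)

private lemma eval_abs_eq {p : Polynomial ℂ} (hm : p.Monic) (z : ℂ) :
    ‖p.eval z‖ = (p.roots.map fun a => ‖z - a‖).prod := by
  conv_lhs => rw [(IsAlgClosed.splits p).eq_prod_roots_of_monic hm]
  rw [eval_multiset_prod, Multiset.map_map, ← normHom_apply, map_multiset_prod, Multiset.map_map]
  simp

private lemma semicont {X : Type*} [TopologicalSpace X] {n : ℕ}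
    (φ : X → Polynomial ℂ)
    (hmonic : ∀ x, (φ x).Monic) (hdeg : ∀ x, (φ x).natDegree = n)
    (hcont : ∀ j, Continuous fun x => (φ x).coeff j) (p : X) :
    ∃ U : Set X, IsOpen U ∧ p ∈ U ∧
      ∀ q ∈ U, (φ p).roots.toFinset.card ≤ (φ q).roots.toFinset.card := by
  classical
  set s : Finset ℂ := (φ p).roots.toFinset with hs
  -- separation constant
  set T : Finset (ℂ × ℂ) := (s ×ˢ s).filter (fun ab => ab.1 ≠ ab.2) with hT
  set ε : ℝ := if h : T.Nonempty then (T.inf' h fun ab => dist ab.1 ab.2) / 3 else 1 with hεdef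
  have hε : 0 < ε := by
    rw [hεdef]
    split_ifs with h
    · have : 0 < T.inf' h fun ab => dist ab.1 ab.2 := by
        rw [Finset.lt_inf'_iff]
        intro b hb
        simp only [hT, Finset.mem_filter] at hb
        exact dist_pos.mpr hb.2
      linarith
    · norm_num
  have hsep : ∀ a ∈ s, ∀ b ∈ s, a ≠ b → 2 * ε < dist a b := by
    intro a ha b hb hab
    have hmem : (a, b) ∈ T := by
      simp [hT, Finset.mem_filter, Finset.mem_product, ha, hb, hab]
    rw [hεdef]
    rw [dif_pos ⟨(a, b), hmem⟩]
    have := Finset.inf'_le (fun ab => dist ab.1 ab.2) hmem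
    have hpos : 0 < (T.inf' ⟨(a,b), hmem⟩ fun ab => dist ab.1 ab.2) := by
      refine (Finset.lt_inf'_iff (H := ⟨(a,b), hmem⟩)).mpr ?_
      intro c hc
      simp only [hT, Finset.mem_filter] at hc
      exact dist_pos.mpr hc.2
    calc 2 * ((T.inf' ⟨(a,b), hmem⟩ fun ab => dist ab.1 ab.2) / 3)
        < (T.inf' ⟨(a,b), hmem⟩ fun ab => dist ab.1 ab.2) := by linarith
      _ ≤ dist a b := this
  -- evaluation is continuous in the parameter
  have heval : ∀ z : ℂ, Continuous fun q => (φ q).eval z := by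
    intro z
    have : (fun q => (φ q).eval z) =
        fun q => ∑ i ∈ Finset.range (n + 1), (φ q).coeff i * z ^ i := by
      funext q
      exact eval_eq_sum_range' (by rw [hdeg q]; omega) z
    rw [this]
    exact continuous_finset_sum _ fun i _ => ((hcont i).mul continuous_const)
  set U : Set X := {q | ∀ z ∈ s, ‖(φ q).eval z‖ < ε ^ n} with hU
  refine ⟨U, ?_, ?_, ?_⟩
  · have : U = ⋂ z ∈ s, {q | ‖(φ q).eval z‖ < ε ^ n} := by
      ext q; simp [hU]
    rw [this]
    exact isOpen_biInter_finset fun z _ =>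
      isOpen_lt (continuous_norm.comp (heval z)) continuous_const
  · intro z hz
    have : (φ p).eval z = 0 := by
      rw [← Polynomial.IsRoot.def]
      exact isRoot_of_mem_roots (Multiset.mem_toFinset.mp hz)
    rw [this]
    simpa using pow_pos hε n
  · intro q hq
    have hcard : Multiset.card (φ q).roots = n := by
      rw [← hdeg q]
      exact splits_iff_card_roots.mp (IsAlgClosed.splits _)
    -- each old root has a nearby new root
    have key : ∀ z ∈ s, ∃ w ∈ (φ q).roots.toFinset, dist z w < ε := by
      intro z hz
      by_contra hcon
      push_neg at hcon
      have hbig : ε ^ n ≤ ‖(φ q).eval z‖ := by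
        rw [eval_abs_eq (hmonic q) z]
        have := pow_le_prod_aux hε.le ((φ q).roots.map fun a => ‖z - a‖) ?_
        · rwa [Multiset.card_map, hcard] at this
        · intro x hx
          obtain ⟨a, ha, rfl⟩ := Multiset.mem_map.mp hx
          have := hcon a (Multiset.mem_toFinset.mpr ha)
          rwa [Complex.dist_eq] at this
      exact absurd (hq z hz) (not_lt.mpr hbig)
    set f : ℂ → ℂ := fun z => if h : ∃ w ∈ (φ q).roots.toFinset, dist z w < ε
      then h.choose else 0 with hf
    apply Finset.card_le_card_of_injOn f
    · intro z hz
      have h := key z hz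
      rw [hf]
      simp only [dif_pos h]
      exact h.choose_spec.1
    · intro z1 h1 z2 h2 heq
      by_contra hne
      have k1 := key z1 h1
      have k2 := key z2 h2
      have e1 : f z1 = k1.choose := by rw [hf]; simp only [dif_pos k1]
      have e2 : f z2 = k2.choose := by rw [hf]; simp only [dif_pos k2]
      have d1 := k1.choose_spec.2
      have d2 := k2.choose_spec.2
      have : k1.choose = k2.choose := by rw [← e1, ← e2, heq]
      have htri : dist z1 z2 ≤ dist z1 k1.choose + dist k2.choose z2 := by
        rw [this]; exact dist_triangle _ _ _
      rw [dist_comm k2.choose z2] at htri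
      have := hsep z1 h1 z2 h2 hne
      linarith

theorem distinct_root_count_locally_constant_dense {X : Type*} [TopologicalSpace X] {n : ℕ}
    (φ : X → Polynomial ℂ)
    (hmonic : ∀ x, (φ x).Monic) (hdeg : ∀ x, (φ x).natDegree = n)
    (hcont : ∀ j, Continuous fun x => (φ x).coeff j) :
    IsOpen {p : X | ∃ U : Set X, IsOpen U ∧ p ∈ U ∧
        ∀ q ∈ U, (φ q).roots.toFinset.card = (φ p).roots.toFinset.card} ∧
      Dense {p : X | ∃ U : Set X, IsOpen U ∧ p ∈ U ∧
        ∀ q ∈ U, (φ q).roots.toFinset.card = (φ p).roots.toFinset.card} := by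
  constructor
  · rw [isOpen_iff_forall_mem_open]
    rintro p ⟨U, hUo, hpU, hUc⟩
    refine ⟨U, ?_, hUo, hpU⟩
    intro q hq
    exact ⟨U, hUo, hq, fun r hr => (hUc r hr).trans (hUc q hq).symm⟩
  · rw [dense_iff_inter_open]
    rintro V hVo ⟨v, hv⟩
    set A : Set ℕ := (fun q => (φ q).roots.toFinset.card) '' V with hA
    have hAne : A.Nonempty := ⟨_, v, hv, rfl⟩
    have hAbdd : BddAbove A := by
      refine ⟨n, ?_⟩
      rintro _ ⟨q, _, rfl⟩
      calc (φ q).roots.toFinset.card ≤ Multiset.card (φ q).roots :=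
            Multiset.toFinset_card_le _
        _ ≤ (φ q).natDegree := Polynomial.card_roots' _
        _ = n := hdeg q
    obtain ⟨p, hpV, hpm⟩ := Nat.sSup_mem hAne hAbdd
    obtain ⟨U, hUo, hpU, hU⟩ := semicont φ hmonic hdeg hcont p
    refine ⟨p, hpV, U ∩ V, hUo.inter hVo, ⟨hpU, hpV⟩, ?_⟩
    rintro q ⟨hqU, hqV⟩
    have h1 := hU q hqU
    have h2 : (φ q).roots.toFinset.card ≤ (φ p).roots.toFinset.card := by
      rw [show (φ p).roots.toFinset.card = sSup A from hpm]
      exact le_csSup hAbdd ⟨q, hqV, rfl⟩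
    omega
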